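/- Let s ≥ 2, let C ⊆ Z_{2^s}^n be a subgroup, and let i ∈ {1,…,s}. If the binary code Φ(C_i) is linear, then the binary code Φ(C) is linear. -/

import Mathlib

/-- The `i`-th digit of the binary expansion of `u : ZMod (2^s)`. -/
def gdigit (s : ℕ) (u : ZMod (2^s)) (i : ℕ) : ZMod 2 :=
  if (ZMod.val u).testBit i then 1 else 0

/-- Carlet's generalized Gray map `φ : ZMod (2^s) → (Z_2^{s-1} → Z_2)`:
the coordinate indexed by `y ∈ Z_2^{s-1}` is `u_{s-1} + ∑ u_i y_i`. -/
def gray (s : ℕ) (u : ZMod (2^s)) : (Fin (s - 1) → ZMod 2) → ZMod 2 :=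
  fun y => gdigit s u (s - 1) + ∑ i : Fin (s - 1), gdigit s u (i : ℕ) * y i

/-- The coordinatewise extension `Φ` of the Gray map, on vectors indexed by `ι`. -/
def PhiMap {ι : Type} (s : ℕ) (u : ι → ZMod (2^s)) :
    ι × (Fin (s - 1) → ZMod 2) → ZMod 2 :=
  fun p => gray s (u p.1) p.2

/-- A binary code is linear if it is closed under addition. -/
def IsLinearCode {V : Type} [Add V] (C : Set V) : Prop :=
  ∀ x ∈ C, ∀ y ∈ C, x + y ∈ C

/-- The `m`-fold replication `(c,c,…,c)` of a vector `c` of length `n`. -/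
def replicate {α : Type} (m n : ℕ) (c : Fin n → α) : Fin (m * n) → α :=
  fun k => c ⟨(k : ℕ) % n, Nat.mod_lt _ (Nat.pos_of_ne_zero (fun h => by
    have hk := k.isLt
    simp [h] at hk))⟩

/-- The vector `w_i` made of `2^{s-i+1}` consecutive constant blocks of length `n`,
the `j`-th block having all entries equal to `j·2^{i-1}`. -/
def wRep (s n i : ℕ) : Fin (2 ^ (s - i + 1) * n) → ZMod (2^s) :=
  fun k => (((k : ℕ) / n : ℕ) : ZMod (2^s)) * 2 ^ (i - 1)

/-- The code `C_i = {(c,…,c) + λ·w_i : c ∈ C, λ ∈ Z_{2^s}}`. -/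
def Ci (s n : ℕ) (C : Set (Fin n → ZMod (2^s))) (i : ℕ) :
    Set (Fin (2 ^ (s - i + 1) * n) → ZMod (2^s)) :=
  {x | ∃ c ∈ C, ∃ lam : ZMod (2^s), x = replicate (2 ^ (s - i + 1)) n c + lam • wRep s n i}

theorem linear_of_Ci_linear (s n : ℕ) (hs : 2 ≤ s) (C : AddSubgroup (Fin n → ZMod (2^s)))
    (i : ℕ) (hi1 : 1 ≤ i) (his : i ≤ s)
    (h : IsLinearCode (PhiMap s '' Ci s n (C : Set (Fin n → ZMod (2^s))) i)) :
    IsLinearCode (PhiMap s '' (C : Set (Fin n → ZMod (2^s)))) := by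
  rintro x ⟨c, hc, rfl⟩ y ⟨c', hc', rfl⟩
  rcases Nat.eq_zero_or_pos n with hn | hn
  · subst hn
    refine ⟨c, hc, ?_⟩
    funext p
    exact absurd p.1.isLt (by simp)
  · have hrep : ∀ d, d ∈ (C : Set (Fin n → ZMod (2^s))) →
        PhiMap s (replicate (2 ^ (s - i + 1)) n d) ∈
          PhiMap s '' Ci s n (C : Set (Fin n → ZMod (2^s))) i := by
      intro d hd
      exact ⟨_, ⟨d, hd, 0, by simp⟩, rfl⟩
    obtain ⟨w, ⟨c'', hc'', lam, rfl⟩, heq⟩ := h _ (hrep c hc) _ (hrep c' hc')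
    refine ⟨c'', hc'', ?_⟩
    funext p
    obtain ⟨k, yv⟩ := p
    have hk : (k : ℕ) < 2 ^ (s - i + 1) * n :=
      lt_of_lt_of_le k.isLt (Nat.le_mul_of_pos_left n (Nat.pow_pos (by norm_num)))
    have := congrFun heq (⟨(k : ℕ), hk⟩, yv)
    have hmod : (k : ℕ) % n = (k : ℕ) := Nat.mod_eq_of_lt k.isLt
    have hdiv : (k : ℕ) / n = 0 := Nat.div_eq_of_lt k.isLt
    simp only [PhiMap, Pi.add_apply, replicate, wRep, smul_eq_mul, Pi.smul_apply,
      hmod, hdiv, Nat.cast_zero, zero_mul, mul_zero, add_zero] at this ⊢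
    convert this using 3 <;> exact (Fin.eta k k.isLt).symm
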